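/- Let C₁ = K/W where K ~ N(0, σ₁²) and W ~ N(μ₂, σ₂²) are independent Gaussian random variables with σ₁, σ₂ > 0. Then C₁ has density f(c) = (1/√(2π)) u(c)^{-3/2} [ √(2u(c)) σ₁σ₂ /√π · e^{-μ₂²/(2σ₂²)} + σ₁² μ₂ e^{-μ₂² c²/(2u(c))} erf( μ₂ σ₁ /(√2 σ₂ √u(c)) ) ], where u(c) = σ₁² + c² σ₂². -/

import Mathlib

open MeasureTheory ProbabilityTheory Real

/-- The Gauss error function. -/
noncomputable def erf (x : ℝ) : ℝ := (2 / Real.sqrt π) * ∫ t in (0:ℝ)..x, Real.exp (-t ^ 2)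

/-- The density of the ratio of independent Gaussians `N(0,σ₁²) / N(μ₂,σ₂²)`. -/
noncomputable def gaussRatioPDF (σ₁ σ₂ μ₂ c : ℝ) : ℝ :=
  (1 / Real.sqrt (2 * π)) * (σ₁ ^ 2 + c ^ 2 * σ₂ ^ 2) ^ (-(3:ℝ)/2) *
    (Real.sqrt (2 * (σ₁ ^ 2 + c ^ 2 * σ₂ ^ 2)) * σ₁ * σ₂ / Real.sqrt π *
        Real.exp (-μ₂ ^ 2 / (2 * σ₂ ^ 2)) +
      σ₁ ^ 2 * μ₂ * Real.exp (-μ₂ ^ 2 * c ^ 2 / (2 * (σ₁ ^ 2 + c ^ 2 * σ₂ ^ 2))) *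
        erf (μ₂ * σ₁ / (Real.sqrt 2 * σ₂ * Real.sqrt (σ₁ ^ 2 + c ^ 2 * σ₂ ^ 2))))

open Set Filter

-- erf in terms of scaled integral
lemma erf_sqrt_mul (α : ℝ) (hα : 0 < α) (x : ℝ) :
    ∫ t in (0:ℝ)..x, Real.exp (-α * t ^ 2)
      = Real.sqrt π / (2 * Real.sqrt α) * erf (Real.sqrt α * x) := by
  have hs : (0:ℝ) < Real.sqrt α := Real.sqrt_pos.mpr hα
  have h := intervalIntegral.integral_comp_mul_left (a := (0:ℝ)) (b := x)
      (fun t => Real.exp (-t ^ 2)) (c := Real.sqrt α) (ne_of_gt hs)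
  have h2 : ∀ t : ℝ, Real.exp (-(Real.sqrt α * t) ^ 2) = Real.exp (-α * t ^ 2) := by
    intro t
    rw [mul_pow, Real.sq_sqrt hα.le]
    ring_nf
  rw [erf]
  rw [mul_zero] at h
  have h3 : ∫ t in (0:ℝ)..x, Real.exp (-α * t ^ 2)
      = (Real.sqrt α)⁻¹ • ∫ t in (0:ℝ)..(Real.sqrt α * x), Real.exp (-t ^ 2) := by
    rw [← h]; congr 1; ext t; exact (h2 t).symm
  rw [h3, smul_eq_mul]
  have hπ : (0:ℝ) < Real.sqrt π := Real.sqrt_pos.mpr Real.pi_pos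
  field_simp

lemma erf_neg (x : ℝ) : erf (-x) = - erf x := by
  rw [erf, erf, ← mul_neg]
  congr 1
  have h := intervalIntegral.integral_comp_neg (a := (0:ℝ)) (b := -x)
      (fun t => Real.exp (-t ^ 2))
  simp only [neg_sq, neg_zero, neg_neg] at h
  rw [h, intervalIntegral.integral_symm]

lemma integrable_exp_shift (α m : ℝ) (hα : 0 < α) :
    Integrable (fun w : ℝ => Real.exp (-α * (w - m) ^ 2)) := by
  have h := (integrable_exp_neg_mul_sq hα).comp_sub_right (g := m)
  simpa using h

lemma integrable_sub_mul_exp_shift (α m : ℝ) (hα : 0 < α) :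
    Integrable (fun w : ℝ => (w - m) * Real.exp (-α * (w - m) ^ 2)) := by
  have h := (integrable_mul_exp_neg_mul_sq hα).comp_sub_right (g := m)
  simpa using h

lemma integrable_abs_mul_exp_shift (α m : ℝ) (hα : 0 < α) :
    Integrable (fun w : ℝ => |w| * Real.exp (-α * (w - m) ^ 2)) := by
  have h1 : Integrable (fun w : ℝ =>
      |w - m| * Real.exp (-α * (w - m) ^ 2) + |m| * Real.exp (-α * (w - m) ^ 2)) := by
    refine Integrable.add ?_ ((integrable_exp_shift α m hα).const_mul _)
    have := ((integrable_mul_exp_neg_mul_sq hα).abs).comp_sub_right (g := m)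
    refine this.congr (ae_of_all _ fun w => ?_)
    simp [abs_mul, abs_of_nonneg (Real.exp_pos _).le]
  refine h1.mono' ?_ (ae_of_all _ fun w => ?_)
  · exact (continuous_abs.mul (by fun_prop)).aestronglyMeasurable
  · have he : (0:ℝ) < Real.exp (-α * (w - m) ^ 2) := Real.exp_pos _
    have : |w| ≤ |w - m| + |m| := by
      calc |w| = |(w - m) + m| := by ring_nf
      _ ≤ |w - m| + |m| := abs_add_le _ _
    rw [Real.norm_eq_abs, abs_of_nonneg (by positivity)]
    nlinarith

lemma integral_Ioi_exp_shift (α m : ℝ) (hα : 0 < α) :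
    ∫ w in Ioi (0:ℝ), Real.exp (-α * (w - m) ^ 2)
      = Real.sqrt (π / α) / 2 * (1 + erf (Real.sqrt α * m)) := by
  have hmp : MeasurePreserving (fun t : ℝ => t + m) volume volume :=
    measurePreserving_add_right volume m
  have hemb : MeasurableEmbedding (fun t : ℝ => t + m) :=
    (MeasurableEquiv.addRight m).measurableEmbedding
  have hpre : (fun t : ℝ => t + m) ⁻¹' Ioi 0 = Ioi (-m) := by
    ext t; simp [neg_lt_iff_pos_add, add_comm]
  have h1 : ∫ t in Ioi (-m), Real.exp (-α * t ^ 2)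
      = ∫ w in Ioi (0:ℝ), Real.exp (-α * (w - m) ^ 2) := by
    have := hmp.setIntegral_preimage_emb hemb
      (fun w => Real.exp (-α * (w - m) ^ 2)) (Ioi 0)
    rw [hpre] at this
    simpa using this
  rw [← h1]
  have hint : Integrable (fun t : ℝ => Real.exp (-α * t ^ 2)) := integrable_exp_neg_mul_sq hα
  have hIic : ∫ t in Iic (-m), Real.exp (-α * t ^ 2)
      = (∫ t in Iic (0:ℝ), Real.exp (-α * t ^ 2)) + ∫ t in (0:ℝ)..(-m), Real.exp (-α * t ^ 2) := by
    have h := intervalIntegral.integral_Iic_sub_Iic (f := fun t : ℝ => Real.exp (-α * t ^ 2))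
      (a := (0:ℝ)) (b := -m) (μ := volume) hint.integrableOn hint.integrableOn
    beta_reduce at h
    linarith
  have htot : (∫ t in Iic (-m), Real.exp (-α * t ^ 2))
      + ∫ t in Ioi (-m), Real.exp (-α * t ^ 2) = Real.sqrt (π / α) := by
    rw [intervalIntegral.integral_Iic_add_Ioi hint.integrableOn hint.integrableOn]
    exact integral_gaussian α
  have htot0 : (∫ t in Iic (0:ℝ), Real.exp (-α * t ^ 2))
      + ∫ t in Ioi (0:ℝ), Real.exp (-α * t ^ 2) = Real.sqrt (π / α) := by
    rw [intervalIntegral.integral_Iic_add_Ioi hint.integrableOn hint.integrableOn]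
    exact integral_gaussian α
  have hIoi0 : ∫ t in Ioi (0:ℝ), Real.exp (-α * t ^ 2) = Real.sqrt (π / α) / 2 :=
    integral_gaussian_Ioi α
  have herf : ∫ t in (0:ℝ)..(-m), Real.exp (-α * t ^ 2)
      = Real.sqrt π / (2 * Real.sqrt α) * erf (Real.sqrt α * (-m)) := erf_sqrt_mul α hα (-m)
  have hsqrt : Real.sqrt (π / α) = Real.sqrt π / Real.sqrt α :=
    Real.sqrt_div Real.pi_pos.le α
  rw [mul_neg, erf_neg] at herf
  have key : ∫ t in Ioi (-m), Real.exp (-α * t ^ 2)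
      = Real.sqrt (π / α) / 2 + Real.sqrt π / (2 * Real.sqrt α) * erf (Real.sqrt α * m) := by
    linarith
  rw [key, hsqrt]
  ring

lemma integral_Ioi_id_mul_exp (α m : ℝ) (hα : 0 < α) :
    ∫ w in Ioi (0:ℝ), w * Real.exp (-α * (w - m) ^ 2)
      = Real.exp (-α * m ^ 2) / (2 * α)
        + m * (Real.sqrt (π / α) / 2 * (1 + erf (Real.sqrt α * m))) := by
  have hint1 : IntegrableOn (fun w : ℝ => (w - m) * Real.exp (-α * (w - m) ^ 2)) (Ioi 0) :=
    (integrable_sub_mul_exp_shift α m hα).integrableOn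
  have hint2 : IntegrableOn (fun w : ℝ => Real.exp (-α * (w - m) ^ 2)) (Ioi 0) :=
    (integrable_exp_shift α m hα).integrableOn
  have hsplit : ∀ w : ℝ, w * Real.exp (-α * (w - m) ^ 2)
      = (w - m) * Real.exp (-α * (w - m) ^ 2) + m * Real.exp (-α * (w - m) ^ 2) := by
    intro w; ring
  have hderiv : ∀ x ∈ Ioi (0:ℝ),
      HasDerivAt (fun w : ℝ => -Real.exp (-α * (w - m) ^ 2) / (2 * α))
        ((x - m) * Real.exp (-α * (x - m) ^ 2)) x := by
    intro x _
    have h1 : HasDerivAt (fun w : ℝ => -α * (w - m) ^ 2) (-α * (2 * (x - m))) x := by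
      have := ((hasDerivAt_id x).sub_const m).pow 2
      simpa using (this.const_mul (-α))
    have h2 := (h1.exp).div_const (2 * α)
    have h3 := h2.neg
    have h2α : (2 * α) ≠ 0 := by positivity
    refine (h3.congr_deriv ?_).congr_of_eventuallyEq (Filter.Eventually.of_forall fun w => ?_)
    · rw [← neg_div, div_eq_iff h2α]; ring
    · exact neg_div _ _
  have htend : Tendsto (fun w : ℝ => -Real.exp (-α * (w - m) ^ 2) / (2 * α)) atTop (nhds 0) := by
    have h1 : Tendsto (fun w : ℝ => -α * (w - m) ^ 2) atTop atBot := by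
      apply Tendsto.const_mul_atTop_of_neg (neg_lt_zero.mpr hα)
      exact (tendsto_pow_atTop (two_ne_zero)).comp (tendsto_atTop_add_const_right _ (-m) tendsto_id)
    have h2 : Tendsto (fun w : ℝ => Real.exp (-α * (w - m) ^ 2)) atTop (nhds 0) :=
      Real.tendsto_exp_atBot.comp h1
    have := (h2.neg).div_const (2 * α)
    simpa using this
  have hFTC : ∫ w in Ioi (0:ℝ), (w - m) * Real.exp (-α * (w - m) ^ 2)
      = 0 - (-Real.exp (-α * (0 - m) ^ 2) / (2 * α)) := by
    refine MeasureTheory.integral_Ioi_of_hasDerivAt_of_tendsto ?_ hderiv hint1 htend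
    exact (Continuous.div_const (by fun_prop) _).continuousWithinAt
  calc ∫ w in Ioi (0:ℝ), w * Real.exp (-α * (w - m) ^ 2)
      = ∫ w in Ioi (0:ℝ), ((w - m) * Real.exp (-α * (w - m) ^ 2)
          + m * Real.exp (-α * (w - m) ^ 2)) := by
        exact setIntegral_congr_fun measurableSet_Ioi fun w _ => hsplit w
    _ = (∫ w in Ioi (0:ℝ), (w - m) * Real.exp (-α * (w - m) ^ 2))
          + ∫ w in Ioi (0:ℝ), m * Real.exp (-α * (w - m) ^ 2) := by
        exact MeasureTheory.integral_add hint1 (hint2.const_mul m)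
    _ = Real.exp (-α * m ^ 2) / (2 * α)
        + m * (Real.sqrt (π / α) / 2 * (1 + erf (Real.sqrt α * m))) := by
        rw [hFTC, MeasureTheory.integral_const_mul, integral_Ioi_exp_shift α m hα]
        ring_nf

lemma integral_abs_mul_exp (α m : ℝ) (hα : 0 < α) :
    ∫ w : ℝ, |w| * Real.exp (-α * (w - m) ^ 2)
      = Real.exp (-α * m ^ 2) / α + m * Real.sqrt (π / α) * erf (Real.sqrt α * m) := by
  have hint : Integrable (fun w : ℝ => |w| * Real.exp (-α * (w - m) ^ 2)) :=
    integrable_abs_mul_exp_shift α m hα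
  have hsplit : (∫ w in Iic (0:ℝ), |w| * Real.exp (-α * (w - m) ^ 2))
      + ∫ w in Ioi (0:ℝ), |w| * Real.exp (-α * (w - m) ^ 2)
      = ∫ w : ℝ, |w| * Real.exp (-α * (w - m) ^ 2) :=
    intervalIntegral.integral_Iic_add_Ioi hint.integrableOn hint.integrableOn
  have hIoi : ∫ w in Ioi (0:ℝ), |w| * Real.exp (-α * (w - m) ^ 2)
      = ∫ w in Ioi (0:ℝ), w * Real.exp (-α * (w - m) ^ 2) :=
    setIntegral_congr_fun measurableSet_Ioi fun w hw => by
      rw [abs_of_pos (by exact hw)]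
  have hIic : ∫ w in Iic (0:ℝ), |w| * Real.exp (-α * (w - m) ^ 2)
      = ∫ w in Ioi (0:ℝ), w * Real.exp (-α * (w - (-m)) ^ 2) := by
    have h := integral_comp_neg_Ioi (0:ℝ)
      (fun w => |w| * Real.exp (-α * (w - m) ^ 2))
    rw [neg_zero] at h
    rw [← h]
    refine setIntegral_congr_fun measurableSet_Ioi fun w hw => ?_
    rw [abs_neg, abs_of_pos (by exact hw)]
    ring_nf
  rw [← hsplit, hIoi, hIic, integral_Ioi_id_mul_exp α m hα, integral_Ioi_id_mul_exp α (-m) hα,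
    mul_neg, erf_neg]
  ring_nf

lemma gaussian_prod_eq (σ₁ σ₂ μ₂ : ℝ) (hσ₁ : 0 < σ₁) (hσ₂ : 0 < σ₂) (c w : ℝ) :
    gaussianPDFReal 0 (Real.toNNReal (σ₁ ^ 2)) (c * w) *
      gaussianPDFReal μ₂ (Real.toNNReal (σ₂ ^ 2)) w =
    (1 / (2 * π * σ₁ * σ₂)) * Real.exp (-μ₂ ^ 2 * c ^ 2 / (2 * (σ₁ ^ 2 + c ^ 2 * σ₂ ^ 2))) *
      Real.exp (-((σ₁ ^ 2 + c ^ 2 * σ₂ ^ 2) / (2 * σ₁ ^ 2 * σ₂ ^ 2)) *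
        (w - μ₂ * σ₁ ^ 2 / (σ₁ ^ 2 + c ^ 2 * σ₂ ^ 2)) ^ 2) := by
  have hu : (0:ℝ) < σ₁ ^ 2 + c ^ 2 * σ₂ ^ 2 := by positivity
  have hc1 : ((Real.toNNReal (σ₁ ^ 2) : NNReal) : ℝ) = σ₁ ^ 2 := Real.coe_toNNReal _ (by positivity)
  have hc2 : ((Real.toNNReal (σ₂ ^ 2) : NNReal) : ℝ) = σ₂ ^ 2 := Real.coe_toNNReal _ (by positivity)
  rw [gaussianPDFReal, gaussianPDFReal, hc1, hc2]
  have hs1 : Real.sqrt (2 * π * σ₁ ^ 2) = Real.sqrt (2 * π) * σ₁ := by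
    rw [Real.sqrt_mul (by positivity), Real.sqrt_sq hσ₁.le]
  have hs2 : Real.sqrt (2 * π * σ₂ ^ 2) = Real.sqrt (2 * π) * σ₂ := by
    rw [Real.sqrt_mul (by positivity), Real.sqrt_sq hσ₂.le]
  have hsq : Real.sqrt (2 * π) * Real.sqrt (2 * π) = 2 * π :=
    Real.mul_self_sqrt (by positivity)
  have hexp : Real.exp (- (c * w - 0) ^ 2 / (2 * σ₁ ^ 2)) * Real.exp (- (w - μ₂) ^ 2 / (2 * σ₂ ^ 2))
      = Real.exp (-μ₂ ^ 2 * c ^ 2 / (2 * (σ₁ ^ 2 + c ^ 2 * σ₂ ^ 2))) *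
        Real.exp (-((σ₁ ^ 2 + c ^ 2 * σ₂ ^ 2) / (2 * σ₁ ^ 2 * σ₂ ^ 2)) *
          (w - μ₂ * σ₁ ^ 2 / (σ₁ ^ 2 + c ^ 2 * σ₂ ^ 2)) ^ 2) := by
    rw [← Real.exp_add, ← Real.exp_add]
    congr 1
    field_simp
    ring
  calc (Real.sqrt (2 * π * σ₁ ^ 2))⁻¹ * Real.exp (- (c * w - 0) ^ 2 / (2 * σ₁ ^ 2)) *
        ((Real.sqrt (2 * π * σ₂ ^ 2))⁻¹ * Real.exp (- (w - μ₂) ^ 2 / (2 * σ₂ ^ 2)))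
      = ((Real.sqrt (2 * π * σ₁ ^ 2))⁻¹ * (Real.sqrt (2 * π * σ₂ ^ 2))⁻¹) *
        (Real.exp (- (c * w - 0) ^ 2 / (2 * σ₁ ^ 2)) * Real.exp (- (w - μ₂) ^ 2 / (2 * σ₂ ^ 2))) := by
        ring
    _ = _ := by
        rw [hexp, hs1, hs2]
        have : (Real.sqrt (2 * π) * σ₁)⁻¹ * (Real.sqrt (2 * π) * σ₂)⁻¹
            = 1 / (2 * π * σ₁ * σ₂) := by
          have h2 : Real.sqrt 2 * Real.sqrt 2 = 2 := Real.mul_self_sqrt (by norm_num)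
          have hp : Real.sqrt π * Real.sqrt π = π := Real.mul_self_sqrt Real.pi_pos.le
          field_simp
          rw [Real.sq_sqrt (by positivity)]
        rw [this]
        ring

section Inner

variable {σ₁ σ₂ μ₂ : ℝ}

lemma integrable_inner (hσ₁ : 0 < σ₁) (hσ₂ : 0 < σ₂) (c : ℝ) :
    Integrable (fun w : ℝ => |w| * (gaussianPDFReal 0 (Real.toNNReal (σ₁ ^ 2)) (c * w) *
      gaussianPDFReal μ₂ (Real.toNNReal (σ₂ ^ 2)) w)) := by
  have hu : (0:ℝ) < σ₁ ^ 2 + c ^ 2 * σ₂ ^ 2 := by positivity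
  have hα : (0:ℝ) < (σ₁ ^ 2 + c ^ 2 * σ₂ ^ 2) / (2 * σ₁ ^ 2 * σ₂ ^ 2) := by positivity
  have h := ((integrable_abs_mul_exp_shift _
      (μ₂ * σ₁ ^ 2 / (σ₁ ^ 2 + c ^ 2 * σ₂ ^ 2)) hα).const_mul
      ((1 / (2 * π * σ₁ * σ₂)) * Real.exp (-μ₂ ^ 2 * c ^ 2 / (2 * (σ₁ ^ 2 + c ^ 2 * σ₂ ^ 2)))))
  refine h.congr (ae_of_all _ fun w => ?_)
  dsimp only
  rw [gaussian_prod_eq σ₁ σ₂ μ₂ hσ₁ hσ₂ c w]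
  ring

lemma inner_integral_eq (hσ₁ : 0 < σ₁) (hσ₂ : 0 < σ₂) (c : ℝ) :
    ∫ w : ℝ, |w| * (gaussianPDFReal 0 (Real.toNNReal (σ₁ ^ 2)) (c * w) *
      gaussianPDFReal μ₂ (Real.toNNReal (σ₂ ^ 2)) w) = gaussRatioPDF σ₁ σ₂ μ₂ c := by
  set u : ℝ := σ₁ ^ 2 + c ^ 2 * σ₂ ^ 2 with hu_def
  have hu : (0:ℝ) < u := by positivity
  set α : ℝ := u / (2 * σ₁ ^ 2 * σ₂ ^ 2) with hα_def
  have hα : (0:ℝ) < α := by positivity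
  set m : ℝ := μ₂ * σ₁ ^ 2 / u with hm_def
  set C : ℝ := 1 / (2 * π * σ₁ * σ₂) with hC_def
  set E : ℝ := Real.exp (-μ₂ ^ 2 * c ^ 2 / (2 * u)) with hE_def
  have hstep : ∫ w : ℝ, |w| * (gaussianPDFReal 0 (Real.toNNReal (σ₁ ^ 2)) (c * w) *
      gaussianPDFReal μ₂ (Real.toNNReal (σ₂ ^ 2)) w)
      = (C * E) * ∫ w : ℝ, |w| * Real.exp (-α * (w - m) ^ 2) := by
    rw [← MeasureTheory.integral_const_mul]
    congr 1
    ext w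
    rw [gaussian_prod_eq σ₁ σ₂ μ₂ hσ₁ hσ₂ c w]
    ring
  rw [hstep, integral_abs_mul_exp α m hα]
  -- sqrt facts
  have hsu : Real.sqrt u * Real.sqrt u = u := Real.mul_self_sqrt hu.le
  have hs2 : Real.sqrt 2 * Real.sqrt 2 = 2 := Real.mul_self_sqrt (by norm_num)
  have hsp : Real.sqrt π * Real.sqrt π = π := Real.mul_self_sqrt Real.pi_pos.le
  have h2π : Real.sqrt (2 * π) = Real.sqrt 2 * Real.sqrt π := Real.sqrt_mul (by norm_num) π
  have h2u : Real.sqrt (2 * u) = Real.sqrt 2 * Real.sqrt u := Real.sqrt_mul (by norm_num) u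
  have hsu' : (0:ℝ) < Real.sqrt u := Real.sqrt_pos.mpr hu
  have hs2' : (0:ℝ) < Real.sqrt 2 := Real.sqrt_pos.mpr (by norm_num)
  have hsp' : (0:ℝ) < Real.sqrt π := Real.sqrt_pos.mpr Real.pi_pos
  have hαval : Real.sqrt α = Real.sqrt u / (Real.sqrt 2 * (σ₁ * σ₂)) := by
    rw [hα_def, Real.sqrt_div hu.le]
    congr 1
    rw [show 2 * σ₁ ^ 2 * σ₂ ^ 2 = 2 * (σ₁ * σ₂) ^ 2 by ring, Real.sqrt_mul (by norm_num),
      Real.sqrt_sq (by positivity)]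
  have hπα : Real.sqrt (π / α) = Real.sqrt π * (Real.sqrt 2 * (σ₁ * σ₂)) / Real.sqrt u := by
    rw [Real.sqrt_div Real.pi_pos.le, hαval, div_div_eq_mul_div]
  have harg : Real.sqrt α * m = μ₂ * σ₁ / (Real.sqrt 2 * σ₂ * Real.sqrt u) := by
    rw [hαval, hm_def]
    field_simp
    rw [Real.sq_sqrt hu.le]; ring
  have hrpow : u ^ (-(3:ℝ)/2) = (u * Real.sqrt u)⁻¹ := by
    rw [show (-(3:ℝ)/2) = -(3/2) by norm_num, Real.rpow_neg hu.le]
    congr 1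
    rw [show ((3:ℝ)/2) = 1 + 1/2 by norm_num, Real.rpow_add hu, Real.rpow_one,
      ← Real.sqrt_eq_rpow]
  have hexpm : E * Real.exp (-α * m ^ 2) = Real.exp (-μ₂ ^ 2 / (2 * σ₂ ^ 2)) := by
    rw [hE_def, ← Real.exp_add]
    congr 1
    rw [hα_def, hm_def, hu_def]
    field_simp
    ring
  rw [gaussRatioPDF]
  rw [← hu_def, ← hE_def, hrpow, h2u, h2π, ← harg]
  have hB1 : C / α = 1 / (Real.sqrt 2 * Real.sqrt π) * (u * Real.sqrt u)⁻¹ *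
      (Real.sqrt 2 * Real.sqrt u * σ₁ * σ₂ / Real.sqrt π) := by
    rw [hC_def, hα_def]
    field_simp
    rw [Real.sq_sqrt Real.pi_pos.le]
  have hB2 : C * (m * Real.sqrt (π / α)) = 1 / (Real.sqrt 2 * Real.sqrt π) *
      (u * Real.sqrt u)⁻¹ * (σ₁ ^ 2 * μ₂) := by
    rw [hC_def, hm_def, hπα]
    field_simp
    rw [Real.sq_sqrt Real.pi_pos.le, Real.sq_sqrt (by norm_num : (0:ℝ) ≤ 2)]; ring
  calc C * E * (Real.exp (-α * m ^ 2) / α + m * Real.sqrt (π / α) * erf (Real.sqrt α * m))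
      = (C / α) * (E * Real.exp (-α * m ^ 2))
        + (C * (m * Real.sqrt (π / α))) * (E * erf (Real.sqrt α * m)) := by ring
    _ = _ := by rw [hB1, hB2, hexpm]; ring

end Inner

theorem gaussian_ratio_density {Ω : Type*} [MeasurableSpace Ω] (μ : Measure Ω)
    [IsProbabilityMeasure μ] (K W : Ω → ℝ) (hK : Measurable K) (hW : Measurable W)
    (hindep : IndepFun K W μ) (σ₁ σ₂ μ₂ : ℝ) (hσ₁ : 0 < σ₁) (hσ₂ : 0 < σ₂)
    (hdK : Measure.map K μ = gaussianReal 0 (Real.toNNReal (σ₁ ^ 2)))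
    (hdW : Measure.map W μ = gaussianReal μ₂ (Real.toNNReal (σ₂ ^ 2))) :
    Measure.map (fun ω => K ω / W ω) μ =
      volume.withDensity (fun c => ENNReal.ofReal (gaussRatioPDF σ₁ σ₂ μ₂ c)) := by
  have hv₁ : Real.toNNReal (σ₁ ^ 2) ≠ 0 := by
    simp only [ne_eq, Real.toNNReal_eq_zero, not_le]; positivity
  have hv₂ : Real.toNNReal (σ₂ ^ 2) ≠ 0 := by
    simp only [ne_eq, Real.toNNReal_eq_zero, not_le]; positivity
  set v₁ := Real.toNNReal (σ₁ ^ 2)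
  set v₂ := Real.toNNReal (σ₂ ^ 2)
  have hjoint : Measure.map (fun ω => (K ω, W ω)) μ =
      (gaussianReal 0 v₁).prod (gaussianReal μ₂ v₂) := by
    rw [← hdK, ← hdW]
    exact (indepFun_iff_map_prod_eq_prod_map_map hK.aemeasurable hW.aemeasurable).mp hindep
  have hratio : Measurable fun p : ℝ × ℝ => p.1 / p.2 := measurable_fst.div measurable_snd
  have hcomp : (fun ω => K ω / W ω) = (fun p : ℝ × ℝ => p.1 / p.2) ∘ fun ω => (K ω, W ω) := rfl
  rw [hcomp, ← Measure.map_map hratio (hK.prodMk hW), hjoint]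
  ext s hs
  rw [Measure.map_apply hratio hs, Measure.prod_apply_symm (hratio hs), withDensity_apply _ hs]
  -- slice computation for w ≠ 0
  have hslice : ∀ w : ℝ, w ≠ 0 →
      gaussianReal 0 v₁ {k : ℝ | k / w ∈ s}
        = ENNReal.ofReal |w| * ∫⁻ c in s, ENNReal.ofReal (gaussianPDFReal 0 v₁ (c * w)) := by
    intro w hw
    have hA : MeasurableSet {k : ℝ | k / w ∈ s} := (measurable_div_const w) hs
    have hmap : (ENNReal.ofReal |w|) • Measure.map (· * w) volume = volume :=
      Real.smul_map_volume_mul_right hw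
    have hpre : (· * w) ⁻¹' {k : ℝ | k / w ∈ s} = s := by
      ext c; simp [Set.mem_preimage, mul_div_cancel_right₀ _ hw]
    rw [gaussianReal_apply 0 hv₁]
    calc ∫⁻ k in {k : ℝ | k / w ∈ s}, gaussianPDF 0 v₁ k ∂volume
        = ∫⁻ k in {k : ℝ | k / w ∈ s}, gaussianPDF 0 v₁ k
            ∂((ENNReal.ofReal |w|) • Measure.map (· * w) volume) := by rw [hmap]
      _ = ENNReal.ofReal |w| * ∫⁻ k in {k : ℝ | k / w ∈ s}, gaussianPDF 0 v₁ k
            ∂(Measure.map (· * w) volume) := by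
          rw [Measure.restrict_smul, lintegral_smul_measure, smul_eq_mul]
      _ = ENNReal.ofReal |w| * ∫⁻ c in (· * w) ⁻¹' {k : ℝ | k / w ∈ s},
            gaussianPDF 0 v₁ (c * w) ∂volume := by
          rw [setLIntegral_map hA (measurable_gaussianPDF 0 v₁) (measurable_mul_const w)]
      _ = ENNReal.ofReal |w| * ∫⁻ c in s, ENNReal.ofReal (gaussianPDFReal 0 v₁ (c * w)) := by
          rw [hpre]; rfl
  -- rewrite gaussianReal μ₂ v₂ as withDensity
  rw [gaussianReal_of_var_ne_zero _ hv₂]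
  have hH : Measurable fun w : ℝ =>
      gaussianReal 0 v₁ ((fun k : ℝ => (k, w)) ⁻¹' ((fun p : ℝ × ℝ => p.1 / p.2) ⁻¹' s)) :=
    measurable_measure_prodMk_right (hratio hs)
  rw [lintegral_withDensity_eq_lintegral_mul volume (measurable_gaussianPDF μ₂ v₂) hH]
  simp only [Pi.mul_apply]
  have hmeasF : Measurable fun q : ℝ × ℝ =>
      ENNReal.ofReal (|q.1| * (gaussianPDFReal 0 v₁ (q.2 * q.1) * gaussianPDFReal μ₂ v₂ q.1)) := by
    apply Measurable.ennreal_ofReal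
    exact (measurable_fst.abs).mul
      (((measurable_gaussianPDFReal 0 v₁).comp (measurable_snd.mul measurable_fst)).mul
        ((measurable_gaussianPDFReal μ₂ v₂).comp measurable_fst))
  have hae : ∀ᵐ w : ℝ, (w : ℝ) ≠ 0 := by
    rw [MeasureTheory.ae_iff]
    have : {w : ℝ | ¬ w ≠ 0} = {0} := by ext w; simp
    rw [this]
    exact Real.volume_singleton
  have hcongr : ∀ᵐ w : ℝ, gaussianPDF μ₂ v₂ w *
      gaussianReal 0 v₁ ((fun k : ℝ => (k, w)) ⁻¹' ((fun p : ℝ × ℝ => p.1 / p.2) ⁻¹' s))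
      = ∫⁻ c in s, ENNReal.ofReal
          (|w| * (gaussianPDFReal 0 v₁ (c * w) * gaussianPDFReal μ₂ v₂ w)) := by
    filter_upwards [hae] with w hw
    have hpre2 : (fun k : ℝ => (k, w)) ⁻¹' ((fun p : ℝ × ℝ => p.1 / p.2) ⁻¹' s)
        = {k : ℝ | k / w ∈ s} := rfl
    rw [hpre2, hslice w hw, ← mul_assoc]
    have hmeas' : Measurable fun c : ℝ => ENNReal.ofReal (gaussianPDFReal 0 v₁ (c * w)) := by
      exact Measurable.ennreal_ofReal ((measurable_gaussianPDFReal 0 v₁).comp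
        (measurable_mul_const w))
    have hptw : (∫⁻ c in s, ENNReal.ofReal
          (|w| * (gaussianPDFReal 0 v₁ (c * w) * gaussianPDFReal μ₂ v₂ w)))
        = ∫⁻ c in s, (gaussianPDF μ₂ v₂ w * ENNReal.ofReal |w|) *
            ENNReal.ofReal (gaussianPDFReal 0 v₁ (c * w)) := by
      refine setLIntegral_congr_fun hs (fun c _ => ?_)
      rw [gaussianPDF, ← ENNReal.ofReal_mul (gaussianPDFReal_nonneg _ _ _),
        ← ENNReal.ofReal_mul (mul_nonneg (gaussianPDFReal_nonneg _ _ _) (abs_nonneg _))]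
      congr 1
      ring
    rw [hptw, MeasureTheory.lintegral_const_mul _ hmeas']
  rw [lintegral_congr_ae hcongr]
  have hswap := MeasureTheory.lintegral_lintegral_swap (μ := (volume : Measure ℝ))
    (ν := (volume : Measure ℝ).restrict s)
    (f := fun w c => ENNReal.ofReal
      (|w| * (gaussianPDFReal 0 v₁ (c * w) * gaussianPDFReal μ₂ v₂ w)))
    hmeasF.aemeasurable
  rw [hswap]
  refine setLIntegral_congr_fun hs (fun c _ => ?_)
  rw [← MeasureTheory.ofReal_integral_eq_lintegral_ofReal (integrable_inner hσ₁ hσ₂ c)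
    (ae_of_all _ fun w => mul_nonneg (abs_nonneg _)
      (mul_nonneg (gaussianPDFReal_nonneg _ _ _) (gaussianPDFReal_nonneg _ _ _)))]
  rw [inner_integral_eq hσ₁ hσ₂ c]
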